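/- Let N be odd, φ ∈ R^N, and χ ∈ R^N with |χ_j| ≤ ε for all j and ε ≤ π/2. Define |ψ^φ⟩ = (1/√N) Σ_j e^{iφ_j}|j⟩ and |ξ⟩ = |ψ^{φ+χ}⟩. Then |⟨ψ^φ|ξ⟩|² ≥ 1 − (1 − 1/N²) sin²(ε). -/

import Mathlib

open Finset

/-- Vertex case: all `χ j ∈ {ε, -ε}`, `N` odd. -/
lemma vertex_bound (N : ℕ) (hNodd : Odd N) (ε : ℝ) (χ : Fin N → ℝ)
    (h : ∀ j, χ j = ε ∨ χ j = -ε) :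
    (N : ℝ) ^ 2 * Real.cos ε ^ 2 + Real.sin ε ^ 2 ≤
      (∑ j, Real.cos (χ j)) ^ 2 + (∑ j, Real.sin (χ j)) ^ 2 := by
  set g : Fin N → ℤ := fun j => if χ j = ε then 1 else -1 with hg
  have hcos : ∀ j, Real.cos (χ j) = Real.cos ε := by
    intro j; rcases h j with h' | h' <;> rw [h'] <;> simp [Real.cos_neg]
  have hsin : ∀ j, Real.sin (χ j) = (g j : ℝ) * Real.sin ε := by
    intro j
    rcases h j with h' | h'
    · simp [hg, h']
    · by_cases he : χ j = ε
      · simp [hg, he]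
      · rw [h']
        simp only [hg, he, if_false, Int.cast_neg, Int.cast_one, Real.sin_neg]
        ring
  have hA : (∑ j, Real.cos (χ j)) = (N : ℝ) * Real.cos ε := by
    simp [hcos]
  have hB : (∑ j, Real.sin (χ j)) = ((∑ j, g j : ℤ) : ℝ) * Real.sin ε := by
    rw [Finset.sum_congr rfl fun j _ => hsin j, ← Finset.sum_mul]
    push_cast
    ring
  have hodd : Odd (∑ j, g j) := by
    have : ∀ j, g j = 2 * (if χ j = ε then 1 else 0) - 1 := by
      intro j; by_cases he : χ j = ε <;> simp [hg, he]
    rw [Finset.sum_congr rfl fun j _ => this j]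
    rw [Finset.sum_sub_distrib, ← Finset.mul_sum]
    simp only [Finset.sum_const, card_univ, Fintype.card_fin, smul_eq_mul, mul_one]
    obtain ⟨k, hk⟩ := hNodd
    exact ⟨(∑ j, if χ j = ε then 1 else 0) - k - 1, by push_cast [hk]; ring⟩
  have hne : (∑ j, g j) ≠ 0 := by
    intro h0; rw [h0] at hodd; exact (Int.not_odd_iff_even.mpr Even.zero) hodd
  have h1 : (1 : ℤ) ≤ (∑ j, g j) ^ 2 := by
    have := Int.one_le_abs hne
    calc (1:ℤ) = 1^2 := by ring
    _ ≤ |∑ j, g j|^2 := by nlinarith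
    _ = (∑ j, g j)^2 := sq_abs _
  have h1' : (1 : ℝ) ≤ ((∑ j, g j : ℤ) : ℝ) ^ 2 := by exact_mod_cast h1
  rw [hA, hB]
  have hs2 : (0:ℝ) ≤ Real.sin ε ^ 2 := sq_nonneg _
  nlinarith [sq_nonneg (Real.sin ε), mul_le_mul_of_nonneg_right h1' hs2]

/-- Reduction to vertices by moving one coordinate at a time. -/
lemma cube_bound (N : ℕ) (hNodd : Odd N) (ε : ℝ) (hε : ε ≤ Real.pi / 2) (hε0 : 0 ≤ ε) :
    ∀ (n : ℕ) (χ : Fin N → ℝ), (∀ j, |χ j| ≤ ε) →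
      ((univ.filter (fun j => χ j ≠ ε ∧ χ j ≠ -ε)).card ≤ n) →
      (N : ℝ) ^ 2 * Real.cos ε ^ 2 + Real.sin ε ^ 2 ≤
        (∑ j, Real.cos (χ j)) ^ 2 + (∑ j, Real.sin (χ j)) ^ 2 := by
  intro n
  induction n with
  | zero =>
    intro χ hχ hcard
    apply vertex_bound N hNodd
    intro j
    by_contra hj
    push_neg at hj
    have hemp : (univ.filter (fun j => χ j ≠ ε ∧ χ j ≠ -ε)) = ∅ :=
      Finset.card_eq_zero.mp (Nat.le_zero.mp hcard)
    have hmem : j ∈ univ.filter (fun j => χ j ≠ ε ∧ χ j ≠ -ε) := by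
      simp only [mem_filter, mem_univ, true_and]
      exact ⟨hj.1, hj.2⟩
    rw [hemp] at hmem
    exact Finset.notMem_empty j hmem
  | succ n ih =>
    intro χ hχ hcard
    by_cases hc : (univ.filter (fun j => χ j ≠ ε ∧ χ j ≠ -ε)).card ≤ n
    · exact ih χ hχ hc
    · have hpos : 0 < (univ.filter (fun j => χ j ≠ ε ∧ χ j ≠ -ε)).card := by omega
      obtain ⟨j, hj⟩ := Finset.card_pos.mp hpos
      simp only [mem_filter, mem_univ, true_and] at hj
      set b : ℝ := ∑ k ∈ univ.erase j, Real.sin (χ k) with hbdef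
      set a : ℝ := ∑ k ∈ univ.erase j, Real.cos (χ k) with hadef
      set v : ℝ := if 0 ≤ b then -ε else ε with hvdef
      set χ' : Fin N → ℝ := Function.update χ j v with hχ'def
      have hv_mem : |v| ≤ ε := by
        rw [hvdef]; split <;> simp [abs_of_nonneg hε0, abs_of_nonpos (neg_nonpos.mpr hε0), hε0]
      have hχ' : ∀ k, |χ' k| ≤ ε := by
        intro k
        by_cases hk : k = j
        · subst hk; simpa [hχ'def] using hv_mem
        · simpa [hχ'def, Function.update_of_ne hk] using hχ k
      have hsub : (univ.filter (fun k => χ' k ≠ ε ∧ χ' k ≠ -ε)) ⊆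
          (univ.filter (fun k => χ k ≠ ε ∧ χ k ≠ -ε)).erase j := by
        intro k hk
        simp only [mem_filter, mem_univ, true_and] at hk
        have hkj : k ≠ j := by
          intro h; subst h
          rw [hχ'def] at hk
          simp only [Function.update_self] at hk
          rw [hvdef] at hk
          split at hk
          · exact hk.2 rfl
          · exact hk.1 rfl
        rw [Finset.mem_erase]
        refine ⟨hkj, ?_⟩
        simp only [mem_filter, mem_univ, true_and]
        rwa [hχ'def, Function.update_of_ne hkj] at hk
      have hcard' : (univ.filter (fun k => χ' k ≠ ε ∧ χ' k ≠ -ε)).card ≤ n := by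
        have h1 := Finset.card_le_card hsub
        have h2 : ((univ.filter (fun k => χ k ≠ ε ∧ χ k ≠ -ε)).erase j).card
            = (univ.filter (fun k => χ k ≠ ε ∧ χ k ≠ -ε)).card - 1 :=
          Finset.card_erase_of_mem (by simp [hj.1, hj.2])
        omega
      have hstep := ih χ' hχ' hcard'
      refine le_trans hstep ?_
      -- show f(χ') ≤ f(χ)
      have hgen : ∀ f : Fin N → ℝ, (∑ k, f k) = f j + ∑ k ∈ univ.erase j, f k :=
        fun f => (Finset.add_sum_erase univ f (mem_univ j)).symm
      have hsplitc : (∑ k, Real.cos (χ k)) = Real.cos (χ j) + a :=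
        hgen (fun k => Real.cos (χ k))
      have hsplits : (∑ k, Real.sin (χ k)) = Real.sin (χ j) + b :=
        hgen (fun k => Real.sin (χ k))
      have hsplitc' : (∑ k, Real.cos (χ' k)) = Real.cos ε + a := by
        rw [hgen (fun k => Real.cos (χ' k))]
        congr 1
        · rw [hχ'def, Function.update_self, hvdef]
          split <;> simp [Real.cos_neg]
        · apply Finset.sum_congr rfl
          intro k hk
          rw [hχ'def, Function.update_of_ne (Finset.ne_of_mem_erase hk)]
      have hsplits' : (∑ k, Real.sin (χ' k)) = Real.sin v + b := by
        rw [hgen (fun k => Real.sin (χ' k))]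
        congr 1
        · rw [hχ'def, Function.update_self]
        · apply Finset.sum_congr rfl
          intro k hk
          rw [hχ'def, Function.update_of_ne (Finset.ne_of_mem_erase hk)]
      rw [hsplitc, hsplits, hsplitc', hsplits']
      -- key scalar inequalities
      have hεpi : ε ≤ Real.pi := le_trans hε (by linarith [Real.pi_pos])
      have ha0 : 0 ≤ a := by
        rw [hadef]
        apply Finset.sum_nonneg
        intro k _
        apply Real.cos_nonneg_of_mem_Icc
        constructor
        · linarith [abs_le.mp (hχ k) |>.1, hε]
        · linarith [abs_le.mp (hχ k) |>.1, abs_le.mp (hχ k) |>.2, hε]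
      have hcosj : Real.cos ε ≤ Real.cos (χ j) := by
        rw [← Real.cos_abs (χ j)]
        exact Real.cos_le_cos_of_nonneg_of_le_pi (abs_nonneg _) hεpi (hχ j)
      have hsinj_ub : Real.sin (χ j) ≤ Real.sin ε := by
        apply Real.sin_le_sin_of_le_of_le_pi_div_two (by linarith [abs_le.mp (hχ j) |>.1, hε]) hε
        linarith [abs_le.mp (hχ j) |>.2]
      have hsinj_lb : -Real.sin ε ≤ Real.sin (χ j) := by
        rw [← Real.sin_neg]
        apply Real.sin_le_sin_of_le_of_le_pi_div_two (by linarith) (by linarith [abs_le.mp (hχ j) |>.2])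
        linarith [abs_le.mp (hχ j) |>.1]
      have hpyth : Real.cos (χ j) ^ 2 + Real.sin (χ j) ^ 2 = 1 := by
        rw [add_comm]; exact Real.sin_sq_add_cos_sq _
      have hpyth2 : Real.cos ε ^ 2 + Real.sin v ^ 2 = 1 := by
        have : Real.sin v ^ 2 = Real.sin ε ^ 2 := by
          rw [hvdef]; split <;> simp [Real.sin_neg]
        rw [this, add_comm]; exact Real.sin_sq_add_cos_sq _
      have hkey : Real.cos ε * a + Real.sin v * b ≤ Real.cos (χ j) * a + Real.sin (χ j) * b := by
        have h1 : Real.cos ε * a ≤ Real.cos (χ j) * a :=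
          mul_le_mul_of_nonneg_right hcosj ha0
        have h2 : Real.sin v * b ≤ Real.sin (χ j) * b := by
          rw [hvdef]
          by_cases hb : 0 ≤ b
          · rw [if_pos hb, Real.sin_neg]
            exact mul_le_mul_of_nonneg_right hsinj_lb hb
          · rw [if_neg hb]
            exact mul_le_mul_of_nonpos_right hsinj_ub (le_of_lt (not_le.mp hb))
        linarith
      have expand : (Real.cos (χ j) + a)^2 + (Real.sin (χ j) + b)^2
          - ((Real.cos ε + a)^2 + (Real.sin v + b)^2)
          = (Real.cos (χ j)^2 + Real.sin (χ j)^2) - (Real.cos ε^2 + Real.sin v^2)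
            + 2*(Real.cos (χ j)*a + Real.sin (χ j)*b) - 2*(Real.cos ε*a + Real.sin v*b) := by
        ring
      linarith [hkey, hpyth, hpyth2, expand]

theorem stmt3 (N : ℕ) (hN : 0 < N) (hNodd : Odd N) (φ χ : Fin N → ℝ) (ε : ℝ)
    (hχ : ∀ j, |χ j| ≤ ε) (hε : ε ≤ Real.pi / 2) :
    1 - (1 - 1 / (N : ℝ) ^ 2) * Real.sin ε ^ 2 ≤
      ‖∑ j, (starRingEnd ℂ) (((Real.sqrt N)⁻¹ : ℝ) * Complex.exp (Complex.I * (φ j))) *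
          (((Real.sqrt N)⁻¹ : ℝ) * Complex.exp (Complex.I * (φ j + χ j)))‖ ^ 2 := by
  have hε0 : 0 ≤ ε := le_trans (abs_nonneg _) (hχ ⟨0, hN⟩)
  -- simplify the summand
  have hterm : ∀ j, (starRingEnd ℂ) (((Real.sqrt N)⁻¹ : ℝ) * Complex.exp (Complex.I * (φ j))) *
          (((Real.sqrt N)⁻¹ : ℝ) * Complex.exp (Complex.I * (φ j + χ j)))
      = (1 / (N:ℝ) : ℝ) * Complex.exp (Complex.I * (χ j)) := by
    intro j
    rw [map_mul, ← Complex.exp_conj]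
    have hconj1 : (starRingEnd ℂ) (((Real.sqrt N)⁻¹ : ℝ) : ℂ) = (((Real.sqrt N)⁻¹ : ℝ) : ℂ) :=
      Complex.conj_ofReal _
    have hconj2 : (starRingEnd ℂ) (Complex.I * (φ j)) = -(Complex.I * (φ j)) := by
      simp [map_mul, Complex.conj_ofReal]
    rw [hconj1, hconj2]
    have hr : (((Real.sqrt N)⁻¹ : ℝ) * ((Real.sqrt N)⁻¹ : ℝ) : ℝ) = 1 / (N:ℝ) := by
      rw [← mul_inv, Real.mul_self_sqrt (Nat.cast_nonneg N), one_div]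
    have hsq : (((Real.sqrt N)⁻¹ : ℝ) : ℂ) * (((Real.sqrt N)⁻¹ : ℝ) : ℂ) = ((1 / (N:ℝ) : ℝ) : ℂ) := by
      rw [← Complex.ofReal_mul, hr]
    have hexp : Complex.exp (-(Complex.I * (φ j))) * Complex.exp (Complex.I * (φ j + χ j))
        = Complex.exp (Complex.I * (χ j)) := by
      rw [← Complex.exp_add]
      congr 1
      push_cast
      ring
    calc (((Real.sqrt N)⁻¹ : ℝ) : ℂ) * Complex.exp (-(Complex.I * (φ j))) *
          ((((Real.sqrt N)⁻¹ : ℝ) : ℂ) * Complex.exp (Complex.I * (φ j + χ j)))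
        = ((((Real.sqrt N)⁻¹ : ℝ) : ℂ) * (((Real.sqrt N)⁻¹ : ℝ) : ℂ)) *
          (Complex.exp (-(Complex.I * (φ j))) * Complex.exp (Complex.I * (φ j + χ j))) := by ring
      _ = _ := by rw [hsq, hexp]
  rw [Finset.sum_congr rfl fun j _ => hterm j, ← Finset.mul_sum]
  set S : ℂ := ∑ j, Complex.exp (Complex.I * (χ j)) with hS
  have hnorm : ‖((1 / (N:ℝ) : ℝ) : ℂ) * S‖ = (1 / (N:ℝ)) * ‖S‖ := by
    rw [norm_mul, Complex.norm_real, Real.norm_of_nonneg (by positivity)]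
  rw [hnorm]
  have hSre : S.re = ∑ j, Real.cos (χ j) := by
    rw [hS, Complex.re_sum]
    apply Finset.sum_congr rfl
    intro j _
    rw [mul_comm, Complex.exp_ofReal_mul_I_re]
  have hSim : S.im = ∑ j, Real.sin (χ j) := by
    rw [hS, Complex.im_sum]
    apply Finset.sum_congr rfl
    intro j _
    rw [mul_comm, Complex.exp_ofReal_mul_I_im]
  have hnormsq : ‖S‖ ^ 2 = (∑ j, Real.cos (χ j)) ^ 2 + (∑ j, Real.sin (χ j)) ^ 2 := by
    rw [← hSre, ← hSim, Complex.sq_norm, Complex.normSq_apply]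
    ring
  have hbound := cube_bound N hNodd ε hε hε0 N χ hχ (le_trans (Finset.card_le_card (Finset.subset_univ _)) (by simp))
  have hNpos : (0:ℝ) < (N:ℝ) := by exact_mod_cast hN
  have hpyth : Real.sin ε ^ 2 + Real.cos ε ^ 2 = 1 := Real.sin_sq_add_cos_sq ε
  have hNne : (N:ℝ) ≠ 0 := ne_of_gt hNpos
  have hexpand : ((1 / (N:ℝ)) * ‖S‖) ^ 2 = (1/(N:ℝ)^2) * (‖S‖^2) := by ring
  rw [hexpand, hnormsq]
  have hkey : 1 - (1 - 1 / (N:ℝ)^2) * Real.sin ε ^ 2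
      = (1/(N:ℝ)^2) * ((N:ℝ)^2 * Real.cos ε ^ 2 + Real.sin ε ^ 2) := by
    field_simp
    linear_combination (-((N:ℝ)^2)) * hpyth
  rw [hkey]
  exact mul_le_mul_of_nonneg_left hbound (by positivity)
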